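/- Consider a rooted component tree T_i that is binary (every node has at most 2 children), and a merging step in which: every node with exactly two children is selected, the root is selected, and each unselected node is merged into its closest selected ancestor. Then the resulting contracted tree T_{i+1} is also binary. -/

import Mathlib

/-- Consider a rooted binary component tree (every node has at most two children)
and a merging step: a set `S` of nodes is selected, containing the root and every
node with exactly two children; each unselected node is merged into its closest
selected ancestor.  The merging is encoded by the map `g` sending each node to the
selected node of its merged group (`g v = v` for selected `v`, and `g v = g (parent v)`
for unselected `v`).  Then the resulting contracted tree is also binary: each merged
group `{v | g v = d}` has at most two children, i.e. at most two edges from the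
group to nodes outside the group. -/
theorem contracted_tree_binary {V : Type*} [Fintype V]
    (parent : V → Option V) (root : V)
    (hroot : ∀ v : V, parent v = none ↔ v = root)
    (hacyc : WellFounded fun u v : V => parent v = some u)
    (hbinary : ∀ v : V, {u : V | parent u = some v}.ncard ≤ 2)
    (S : Set V) (hrootS : root ∈ S)
    (htwo : ∀ v : V, {u : V | parent u = some v}.ncard = 2 → v ∈ S)
    (g : V → V)
    (hgS : ∀ v ∈ S, g v = v)
    (hgmerge : ∀ v : V, v ∉ S → ∀ p : V, parent v = some p → g v = g p) :
    ∀ d ∈ S, {u : V | g u ≠ d ∧ ∃ v : V, parent u = some v ∧ g v = d}.ncard ≤ 2 := by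
  classical
  intro d hd
  -- nodes of the group other than d are unselected and have a parent in the group
  have hnotS : ∀ v : V, g v = d → v ≠ d → v ∉ S := by
    intro v hv hvd hvS
    exact hvd ((hgS v hvS) ▸ hv)
  have hpar : ∀ v : V, v ∉ S → ∃ p : V, parent v = some p ∧ g p = g v := by
    intro v hvS
    have hvr : v ≠ root := fun h => hvS (h ▸ hrootS)
    have hne : parent v ≠ none := fun h => hvr ((hroot v).mp h)
    obtain ⟨p, hp⟩ := Option.ne_none_iff_exists'.mp hne
    exact ⟨p, hp, (hgmerge v hvS p hp).symm⟩
  -- if g v = d, then d is a (weak) ancestor of v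
  have anc : ∀ v : V, g v = d →
      v = d ∨ Relation.TransGen (fun u v : V => parent v = some u) d v := by
    intro v
    induction v using hacyc.induction with
    | _ v ih =>
      intro hv
      by_cases hvS : v ∈ S
      · left; rw [hgS v hvS] at hv; exact hv
      · obtain ⟨p, hp, hgp⟩ := hpar v hvS
        rcases ih p hp (hgp.trans hv) with h | h
        · exact Or.inr (Relation.TransGen.single (h ▸ hp))
        · exact Or.inr (h.tail hp)
  -- d's parent is not in the group
  have hdC : ¬ ∃ v : V, parent d = some v ∧ g v = d := by
    rintro ⟨v, hpv, hgv⟩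
    have hwf := WellFounded.transGen hacyc
    rcases anc v hgv with h | h
    · rw [h] at hpv
      exact (hwf.isIrrefl).irrefl d (Relation.TransGen.single hpv)
    · exact (hwf.isIrrefl).irrefl d (h.tail hpv)
  -- Finset setup
  let ch : V → Finset V := fun v => Finset.univ.filter (fun u => parent u = some v)
  have hch : ∀ v : V, {u : V | parent u = some v} = ↑(ch v) := by
    intro v; ext u; simp [ch]
  have hchcard : ∀ v : V, (ch v).card ≤ 2 := by
    intro v
    have := hbinary v
    rwa [hch v, Set.ncard_coe_finset] at this
  have hchcard1 : ∀ v : V, v ∉ S → (ch v).card ≤ 1 := by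
    intro v hvS
    have h2 := hchcard v
    have : (ch v).card ≠ 2 := by
      intro h
      exact hvS (htwo v (by rw [hch v, Set.ncard_coe_finset]; exact h))
    omega
  let Ufin : Finset V := Finset.univ.filter (fun v => g v = d)
  let E : Finset V := Ufin.erase d
  let B : Finset V :=
    Finset.univ.filter (fun u => g u ≠ d ∧ ∃ v : V, parent u = some v ∧ g v = d)
  let C : Finset V := Ufin.biUnion ch
  have hdU : d ∈ Ufin := by simp [Ufin, hgS d hd]
  -- C splits as B ∪ E
  have hCeq : C = B ∪ E := by
    ext u
    simp only [C, B, E, Ufin, Finset.mem_biUnion, Finset.mem_union, Finset.mem_erase,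
      Finset.mem_filter, Finset.mem_univ, true_and, ch]
    constructor
    · rintro ⟨v, hgv, hpv⟩
      by_cases hu : g u = d
      · refine Or.inr ⟨?_, hu⟩
        rintro rfl
        exact hdC ⟨v, hpv, hgv⟩
      · exact Or.inl ⟨hu, v, hpv, hgv⟩
    · rintro (⟨_, v, hpv, hgv⟩ | ⟨hud, hu⟩)
      · exact ⟨v, hgv, hpv⟩
      · obtain ⟨p, hp, hgp⟩ := hpar u (hnotS u hu hud)
        exact ⟨p, hgp.trans hu, hp⟩
  have hdisj : Disjoint B E := by
    rw [Finset.disjoint_left]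
    intro u huB huE
    simp only [B, Finset.mem_filter] at huB
    simp only [E, Ufin, Finset.mem_erase, Finset.mem_filter] at huE
    exact huB.2.1 huE.2.2
  -- children sets are pairwise disjoint
  have hCcard : C.card = ∑ v ∈ Ufin, (ch v).card := by
    apply Finset.card_biUnion
    intro x _ y _ hxy
    rw [Function.onFun, Finset.disjoint_left]
    intro u hux huy
    simp only [ch, Finset.mem_filter] at hux huy
    exact hxy (Option.some.inj (hux.2.symm.trans huy.2))
  have hsum : ∑ v ∈ Ufin, (ch v).card ≤ 2 + E.card := by
    rw [← Finset.sum_erase_add _ _ hdU]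
    have h1 : ∑ v ∈ E, (ch v).card ≤ E.card := by
      calc ∑ v ∈ E, (ch v).card ≤ ∑ _v ∈ E, 1 := by
            apply Finset.sum_le_sum
            intro v hv
            simp only [E, Ufin, Finset.mem_erase, Finset.mem_filter] at hv
            exact hchcard1 v (hnotS v hv.2.2 hv.1)
        _ = E.card := by simp
    have h2 := hchcard d
    have hE : ∑ v ∈ Ufin.erase d, (ch v).card = ∑ v ∈ E, (ch v).card := rfl
    omega
  have hcard : B.card + E.card = C.card := by
    rw [hCeq, Finset.card_union_of_disjoint hdisj]
  have hB2 : B.card ≤ 2 := by omega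
  have : {u : V | g u ≠ d ∧ ∃ v : V, parent u = some v ∧ g v = d} = ↑B := by
    ext u; simp [B]
  rw [this, Set.ncard_coe_finset]
  exact hB2
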